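/- For all integers α ≥ 1, β ≥ 2α and k ≥ 2: G_{α,β}(⌊β/2⌋) + (1/k)·(G_{α,β}(⌈β/2⌉) − G_{α,β}(⌊β/2⌋)) > 1/k. (This is the arithmetic content of the paper's claim that under a geometric prior on {α,…,β} with β ≥ 2α, for every k ≥ 2 an agent duplicating into d = ⌊β/2⌋ + 1 agents has an incentive to cheat in k-Knowledge Sharing, so no equilibrium exists.) -/

import Mathlib

/-- Cumulative distribution function of the paper's geometric prior on `{α, …, β}`:
each `j ∈ {α,…,β}` has probability `2^(α-j-1) + c` with
`c = 2^(α-β-1)/(β-α+1)`. -/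
noncomputable def geomCDF (α β t : ℤ) : ℚ :=
  if t < α then 0
  else ∑ j ∈ Finset.Icc α (min t β),
    ((2 : ℚ) ^ (α - j - 1) + (2 : ℚ) ^ (α - β - 1) / ((β - α + 1 : ℤ) : ℚ))

theorem stmt_9 (α β k : ℤ) (hα : 1 ≤ α) (hβ : 2 * α ≤ β) (hk : 2 ≤ k) :
    geomCDF α β (β / 2) +
        (1 / (k : ℚ)) * (geomCDF α β ((β + 1) / 2) - geomCDF α β (β / 2)) >
      1 / (k : ℚ) := by
  set m := β / 2 with hm
  set M := (β + 1) / 2 with hM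
  have hαm : α ≤ m := by omega
  have hmβ : m ≤ β := by omega
  have hmM : m ≤ M := by omega
  have hMβ : M ≤ β := by omega
  have hden : (0 : ℚ) < ((β - α + 1 : ℤ) : ℚ) := by
    have : (0 : ℤ) < β - α + 1 := by linarith
    exact_mod_cast this
  have hc : (0 : ℚ) < (2 : ℚ) ^ (α - β - 1) / ((β - α + 1 : ℤ) : ℚ) :=
    div_pos (by positivity) hden
  have ht : ∀ j : ℤ, (0 : ℚ) <
      (2 : ℚ) ^ (α - j - 1) + (2 : ℚ) ^ (α - β - 1) / ((β - α + 1 : ℤ) : ℚ) :=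
    fun j => add_pos (by positivity) hc
  have hGm : geomCDF α β m =
      ∑ j ∈ Finset.Icc α m,
        ((2 : ℚ) ^ (α - j - 1) + (2 : ℚ) ^ (α - β - 1) / ((β - α + 1 : ℤ) : ℚ)) := by
    rw [geomCDF, if_neg (by omega), min_eq_left hmβ]
  have hGM : geomCDF α β M =
      ∑ j ∈ Finset.Icc α M,
        ((2 : ℚ) ^ (α - j - 1) + (2 : ℚ) ^ (α - β - 1) / ((β - α + 1 : ℤ) : ℚ)) := by
    rw [geomCDF, if_neg (by omega), min_eq_left hMβ]
  have hmono : geomCDF α β m ≤ geomCDF α β M := by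
    rw [hGm, hGM]
    exact Finset.sum_le_sum_of_subset_of_nonneg
      (Finset.Icc_subset_Icc_right hmM) (fun j _ _ => (ht j).le)
  have hhalf : (1 : ℚ) / 2 < geomCDF α β m := by
    rw [hGm]
    have hmem : α ∈ Finset.Icc α m := Finset.mem_Icc.mpr ⟨le_refl α, hαm⟩
    have hsingle := Finset.single_le_sum
      (f := fun j : ℤ => (2 : ℚ) ^ (α - j - 1) + (2 : ℚ) ^ (α - β - 1) / ((β - α + 1 : ℤ) : ℚ))
      (fun j _ => (ht j).le) hmem
    have hval : (2 : ℚ) ^ (α - α - 1) = 1 / 2 := by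
      norm_num
    beta_reduce at hsingle
    rw [hval] at hsingle
    linarith
  have hk2 : (2 : ℚ) ≤ (k : ℚ) := by exact_mod_cast hk
  have hkpos : (0 : ℚ) < (k : ℚ) := by linarith
  have hinv : 1 / (k : ℚ) ≤ 1 / 2 := by
    rw [div_le_div_iff₀ hkpos (by norm_num)]; linarith
  have hnn : 0 ≤ (1 / (k : ℚ)) * (geomCDF α β M - geomCDF α β m) :=
    mul_nonneg (by positivity) (by linarith)
  linarith
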